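/- Let f ∈ AC¹ and let (n_j) be a strictly increasing sequence of even positive integers. Then lim_{j→∞} n_j · sup { |B_{n_j}(f,x) − f(x) − E(f,x)/D_{n_j}(x)| : x ∈ (−1,1), x not a node x_{k,n_j} } = 0. -/

import Mathlib

open Filter Set MeasureTheory

noncomputable section

/-- Equally spaced nodes `x_{k,n} = 2k/n - 1`. -/
def node (n k : ℕ) : ℝ := 2 * k / n - 1

/-- `x` is one of the nodes `x_{0,n}, …, x_{n,n}`. -/
def isNode (n : ℕ) (x : ℝ) : Prop := ∃ k ≤ n, x = node n k

/-- Denominator of Berrut's interpolant. -/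
def Dden (n : ℕ) (x : ℝ) : ℝ :=
  ∑ k ∈ Finset.range (n + 1), (-1 : ℝ) ^ k / (x - node n k)

/-- Numerator of Berrut's interpolant. -/
def Nnum (f : ℝ → ℝ) (n : ℕ) (x : ℝ) : ℝ :=
  ∑ k ∈ Finset.range (n + 1), (-1 : ℝ) ^ k * f (node n k) / (x - node n k)

open Classical in
/-- Berrut's barycentric interpolant. -/
def berrut (f : ℝ → ℝ) (n : ℕ) (x : ℝ) : ℝ :=
  if isNode n x then f x else Nnum f n x / Dden n x

/-- The odd bias function `O(f,x)`. -/
def Ofun (f : ℝ → ℝ) (x : ℝ) : ℝ :=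
  (f x - f 1) / (2 * (x - 1)) - (f x - f (-1)) / (2 * (x + 1))

/-- The even bias function `E(f,x)`. -/
def Efun (f : ℝ → ℝ) (x : ℝ) : ℝ :=
  (f 1 - f x) / (2 * (x - 1)) + (f (-1) - f x) / (2 * (x + 1))

/-- `f` is differentiable on `[-1,1]` with absolutely continuous derivative. -/
def AC1 (f : ℝ → ℝ) : Prop :=
  ∃ f' : ℝ → ℝ,
    (∀ x ∈ Set.Icc (-1 : ℝ) 1, HasDerivWithinAt f (f' x) (Set.Icc (-1 : ℝ) 1) x) ∧
    ∃ g : ℝ → ℝ, IntervalIntegrable g volume (-1) 1 ∧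
      ∀ x ∈ Set.Icc (-1 : ℝ) 1, f' x = f' (-1) + ∫ t in (-1 : ℝ)..x, g t

/-- `x` is regular for the sequence `n j`: eventually never a node. -/
def Regular (n : ℕ → ℕ) (x : ℝ) : Prop := ∃ j₀, ∀ j ≥ j₀, ¬ isNode (n j) x

/-- The function `A(x) = Σ (-1)^k (4k+2)/((2k+1)^2 - x)`. -/
def Afun (x : ℝ) : ℝ := ∑' k : ℕ, (-1 : ℝ) ^ k * (4 * k + 2) / ((2 * k + 1) ^ 2 - x)

/-- `ι_n(x) = ⌊n(x+1)/2⌋`. -/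
def iota (n : ℕ) (x : ℝ) : ℤ := ⌊(n : ℝ) * (x + 1) / 2⌋

/-- `ρ_n(x) = n(x - x_{ι_n(x),n}) - 1 = n(x+1) - 2 ι_n(x) - 1`. -/
def rho (n : ℕ) (x : ℝ) : ℝ := (n : ℝ) * (x + 1) - 2 * (iota n x : ℝ) - 1

open Classical in
/-- The de-biased numerator `Δ_n(f,x)`. -/
def Delta (f : ℝ → ℝ) (n : ℕ) (x : ℝ) : ℝ :=
  if isNode n x then 0 else
    (f (-1) - f x) / (2 * (x + 1)) + (-1 : ℝ) ^ n * (f 1 - f x) / (2 * (x - 1)) +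
      (1 / (n : ℝ)) * ∑ k ∈ Finset.Ioo 0 n, (-1 : ℝ) ^ k * (f (node n k) - f x) / (x - node n k)

end

-- alternating sum bounds
lemma alt_aux (a : ℕ → ℝ) (hd : ∀ j, a (j + 1) ≤ a j) (h0 : ∀ j, 0 ≤ a j) :
    ∀ M : ℕ, 0 ≤ ∑ j ∈ Finset.range (2 * M), (-1 : ℝ) ^ j * a j ∧
      ∑ j ∈ Finset.range (2 * M + 1), (-1 : ℝ) ^ j * a j ≤ a 0 := by
  intro M
  induction M with
  | zero => simp [h0 0]
  | succ M ih =>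
    have h2 : 2 * (M + 1) = 2 * M + 1 + 1 := by ring
    have e1 : ((-1 : ℝ)) ^ (2 * M) = 1 := by
      simpa using (even_two_mul M).neg_one_pow
    have e2 : ((-1 : ℝ)) ^ (2 * M + 1) = -1 := by
      have : Odd (2 * M + 1) := ⟨M, by ring⟩
      simpa using this.neg_one_pow
    constructor
    · rw [h2, Finset.sum_range_succ, Finset.sum_range_succ]
      have := ih.1
      have h01 := h0 (2 * M + 1)
      have hdd := hd (2 * M)
      nlinarith [e1, e2]
    · rw [h2, Finset.sum_range_succ, Finset.sum_range_succ]
      have := ih.2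
      have e3 : ((-1 : ℝ)) ^ (2 * M + 1 + 1) = 1 := by
        have : Even (2 * M + 1 + 1) := ⟨M + 1, by ring⟩
        simpa using this.neg_one_pow
      have hdd := hd (2 * M + 1)
      nlinarith [h0 (2 * M + 2)]

lemma alt_nonneg (a : ℕ → ℝ) (hd : ∀ j, a (j + 1) ≤ a j) (h0 : ∀ j, 0 ≤ a j) (N : ℕ) :
    0 ≤ ∑ j ∈ Finset.range N, (-1 : ℝ) ^ j * a j := by
  rcases Nat.even_or_odd N with ⟨M, hM⟩ | ⟨M, hM⟩
  · have := (alt_aux a hd h0 M).1; rwa [hM, ← two_mul]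
  · rw [hM]
    rw [Finset.sum_range_succ]
    have h1 := (alt_aux a hd h0 M).1
    have e1 : ((-1 : ℝ)) ^ (2 * M) = 1 := by
      simpa using (even_two_mul M).neg_one_pow
    nlinarith [h0 (2 * M)]

lemma alt_le (a : ℕ → ℝ) (hd : ∀ j, a (j + 1) ≤ a j) (h0 : ∀ j, 0 ≤ a j) (N : ℕ) :
    ∑ j ∈ Finset.range N, (-1 : ℝ) ^ j * a j ≤ a 0 := by
  rcases Nat.even_or_odd N with ⟨M, hM⟩ | ⟨M, hM⟩
  · rw [hM, ← two_mul]
    have h1 := (alt_aux a hd h0 M).2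
    rw [Finset.sum_range_succ] at h1
    have e1 : ((-1 : ℝ)) ^ (2 * M) = 1 := by
      simpa using (even_two_mul M).neg_one_pow
    nlinarith [h0 (2 * M)]
  · rw [hM]; exact (alt_aux a hd h0 M).2

lemma alt_ge (a : ℕ → ℝ) (hd : ∀ j, a (j + 1) ≤ a j) (h0 : ∀ j, 0 ≤ a j) (N : ℕ) (hN : 1 ≤ N) :
    a 0 - a 1 ≤ ∑ j ∈ Finset.range N, (-1 : ℝ) ^ j * a j := by
  obtain ⟨K, rfl⟩ := Nat.exists_eq_add_of_le hN
  have h1 : ∑ j ∈ Finset.range (1 + K), (-1 : ℝ) ^ j * a j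
      = a 0 - ∑ j ∈ Finset.range K, (-1 : ℝ) ^ j * a (j + 1) := by
    rw [add_comm 1 K, Finset.sum_range_succ']
    simp [pow_succ, sub_eq_iff_eq_add]
    rw [← Finset.sum_neg_distrib]
    rw [Finset.sum_congr rfl (fun j _ => by ring : ∀ j ∈ Finset.range K, -((-1:ℝ) ^ j * a (j + 1)) = (-1)^j * -(a (j+1)))]
    simp only [mul_neg, Finset.sum_neg_distrib]
    ring
  rw [h1]
  have h2 := alt_le (fun j => a (j + 1)) (fun j => hd (j + 1)) (fun j => h0 (j + 1)) K
  linarith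

-- node lemmas
lemma node_zero (n : ℕ) : node n 0 = -1 := by simp [node]

lemma node_self (n : ℕ) (hn : 0 < n) : node n n = 1 := by
  have h : (n:ℝ) ≠ 0 := Nat.cast_ne_zero.2 hn.ne'
  unfold node
  field_simp
  norm_num

lemma node_succ (n k : ℕ) (hn : 0 < n) : node n (k+1) = node n k + 2 / n := by
  have h : (n:ℝ) ≠ 0 := Nat.cast_ne_zero.2 hn.ne'
  unfold node
  field_simp
  push_cast
  ring

lemma node_mono (n : ℕ) (hn : 0 < n) : Monotone (node n) := by
  have hnr : (0:ℝ) < n := Nat.cast_pos.2 hn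
  intro k l hkl
  have : (k:ℝ) ≤ l := Nat.cast_le.2 hkl
  unfold node
  have h2 : 2*(k:ℝ)/n ≤ 2*(l:ℝ)/n := by
    gcongr
  linarith

lemma node_mem (n k : ℕ) (hn : 0 < n) (hk : k ≤ n) : node n k ∈ Set.Icc (-1:ℝ) 1 := by
  constructor
  · have := node_mono n hn (Nat.zero_le k); rw [node_zero] at this; exact this
  · have := node_mono n hn hk; rw [node_self n hn] at this; exact this

lemma sub_node_ne (n k : ℕ) (x : ℝ) (hnx : ¬ isNode n x) (hk : k ≤ n) : x - node n k ≠ 0 := by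
  intro h
  exact hnx ⟨k, hk, by linarith [sub_eq_zero.mp h]⟩

lemma Dbound (n : ℕ) (hn : 0 < n) {x : ℝ} (hx : x ∈ Set.Ioo (-1:ℝ) 1) (hnx : ¬ isNode n x) :
    (n : ℝ) ≤ |Dden n x| := by
  obtain ⟨hx1, hx2⟩ := hx
  have hnr : (0:ℝ) < n := Nat.cast_pos.2 hn
  have hnne : (n:ℝ) ≠ 0 := hnr.ne'
  set t : ℝ := (n:ℝ) * (x + 1) / 2 with ht
  have ht0 : 0 ≤ t := by rw [ht]; nlinarith
  set i : ℕ := ⌊t⌋₊ with hidef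
  have hit : (i:ℝ) ≤ t := Nat.floor_le ht0
  have hit1 : t < i + 1 := Nat.lt_floor_add_one t
  have hiN : i < n := by
    rw [hidef, Nat.floor_lt ht0, ht]
    nlinarith
  have hnode_le : node n i ≤ x := by
    have h1 : (i:ℝ) ≤ (n:ℝ) * (x + 1) / 2 := by rw [← ht]; exact hit
    unfold node
    rw [sub_le_iff_le_add, div_le_iff₀ hnr]
    nlinarith
  have hnodei : node n i < x :=
    lt_of_le_of_ne hnode_le (fun h => hnx ⟨i, hiN.le, h.symm⟩)
  have hnodei1 : x < node n (i+1) := by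
    have h1 : (n:ℝ) * (x + 1) / 2 < (i:ℝ) + 1 := by rw [← ht]; exact hit1
    unfold node
    rw [lt_sub_iff_add_lt, lt_div_iff₀ hnr]
    push_cast
    nlinarith
  set a : ℕ → ℝ := fun j => 1 / (x - node n (i - j)) with hadef
  set b : ℕ → ℝ := fun l => 1 / (node n (i + 1 + l) - x) with hbdef
  have ha_pos : ∀ j, 0 < x - node n (i - j) := fun j => by
    have := node_mono n hn (Nat.sub_le i j)
    linarith
  have hb_pos : ∀ l, 0 < node n (i + 1 + l) - x := fun l => by
    have := node_mono n hn (Nat.le_add_right (i+1) l)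
    linarith
  have ha0 : ∀ j, 0 ≤ a j := fun j => le_of_lt (by
    rw [hadef]; exact one_div_pos.2 (ha_pos j))
  have hb0 : ∀ l, 0 ≤ b l := fun l => le_of_lt (by
    rw [hbdef]; exact one_div_pos.2 (hb_pos l))
  have ha_anti : ∀ j, a (j+1) ≤ a j := fun j => by
    rw [hadef]
    apply one_div_le_one_div_of_le (ha_pos j)
    have := node_mono n hn (Nat.sub_le_sub_left (Nat.le_succ j) i)
    linarith
  have hb_anti : ∀ l, b (l+1) ≤ b l := fun l => by
    rw [hbdef]
    apply one_div_le_one_div_of_le (hb_pos l)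
    have := node_mono n hn (Nat.add_le_add_left (Nat.le_succ l) (i+1))
    linarith
  set A : ℝ := ∑ j ∈ Finset.range (i+1), (-1 : ℝ) ^ j * a j with hAdef
  set B : ℝ := ∑ l ∈ Finset.range (n-i), (-1 : ℝ) ^ l * b l with hBdef
  have hsplit : Dden n x = (-1 : ℝ) ^ i * (A + B) := by
    have h1 : Dden n x = (∑ k ∈ Finset.range (i+1), (-1 : ℝ) ^ k / (x - node n k))
        + ∑ k ∈ Finset.Ico (i+1) (n+1), (-1 : ℝ) ^ k / (x - node n k) := by
      simp only [Dden]
      rw [Finset.range_eq_Ico,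
        ← Finset.sum_Ico_consecutive _ (Nat.zero_le (i+1)) (by omega : i+1 ≤ n+1), ← Finset.range_eq_Ico]
    have h2 : ∑ k ∈ Finset.range (i+1), (-1 : ℝ) ^ k / (x - node n k)
        = (-1 : ℝ) ^ i * A := by
      rw [← Finset.sum_range_reflect (fun k => (-1 : ℝ) ^ k / (x - node n k)) (i+1)]
      rw [hAdef, Finset.mul_sum]
      apply Finset.sum_congr rfl
      intro j hj
      have hji : j ≤ i := by
        simp only [Finset.mem_range] at hj; omega
      have hred : i + 1 - 1 - j = i - j := by omega
      rw [hred]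
      have hsq : (-1 : ℝ) ^ j * (-1 : ℝ) ^ j = 1 := by
        rw [← pow_add]
        exact Even.neg_one_pow ⟨j, rfl⟩
      have hpw : (-1 : ℝ) ^ (i - j) * (-1 : ℝ) ^ j = (-1 : ℝ) ^ i := by
        rw [← pow_add, Nat.sub_add_cancel hji]
      have hfl : (-1 : ℝ) ^ (i - j) = (-1 : ℝ) ^ i * (-1 : ℝ) ^ j := by
        calc (-1 : ℝ) ^ (i - j) = (-1 : ℝ) ^ (i - j) * ((-1 : ℝ) ^ j * (-1 : ℝ) ^ j) := by
              rw [hsq, mul_one]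
          _ = ((-1 : ℝ) ^ (i - j) * (-1 : ℝ) ^ j) * (-1 : ℝ) ^ j := by ring
          _ = (-1 : ℝ) ^ i * (-1 : ℝ) ^ j := by rw [hpw]
      rw [hadef, hfl]
      ring
    have h3 : ∑ k ∈ Finset.Ico (i+1) (n+1), (-1 : ℝ) ^ k / (x - node n k)
        = (-1 : ℝ) ^ i * B := by
      rw [Finset.sum_Ico_eq_sum_range]
      have hred : n + 1 - (i + 1) = n - i := by omega
      rw [hred, hBdef, Finset.mul_sum]
      apply Finset.sum_congr rfl
      intro l _
      have hne : node n (i + 1 + l) - x ≠ 0 := (hb_pos l).ne'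
      have hxs : x - node n (i + 1 + l) = -(node n (i + 1 + l) - x) := by ring
      rw [hxs, div_neg]
      have hpw : (-1 : ℝ) ^ (i + 1 + l) = -((-1 : ℝ) ^ i * (-1 : ℝ) ^ l) := by
        rw [pow_add, pow_add, pow_one]; ring
      rw [hpw, hbdef]
      field_simp
    rw [h1, h2, h3]; ring
  have hAnn : 0 ≤ A := alt_nonneg a ha_anti ha0 (i+1)
  have hBnn : 0 ≤ B := alt_nonneg b hb_anti hb0 (n-i)
  have habs : |Dden n x| = A + B := by
    rw [hsplit, abs_mul, abs_pow, abs_neg, abs_one, one_pow, one_mul,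
      abs_of_nonneg (by linarith)]
  have hstep : ∀ k, node n (k+1) - node n k = 2 / n := fun k => by
    rw [node_succ n k hn]; ring
  have hA : a 0 - (n:ℝ)/2 ≤ A := by
    rcases Nat.eq_zero_or_pos i with hi0 | hi1
    · have hAa : A = a 0 := by rw [hAdef, hi0]; simp
      rw [hAa]
      have : (0:ℝ) ≤ (n:ℝ)/2 := by positivity
      linarith
    · have h1 := alt_ge a ha_anti ha0 (i+1) (by omega)
      have ha1 : a 1 ≤ (n:ℝ)/2 := by
        rw [hadef]
        simp only
        have hsub : i - 1 + 1 = i := by omega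
        have hst : node n i - node n (i-1) = 2/n := by
          conv_lhs => rw [← hsub]
          exact hstep (i-1)
        have h2n : (0:ℝ) < 2/n := by positivity
        have hle : 2/n ≤ x - node n (i-1) := by linarith
        calc (1:ℝ) / (x - node n (i-1)) ≤ 1 / (2/n) := one_div_le_one_div_of_le h2n hle
          _ = (n:ℝ)/2 := by field_simp
      linarith
  have hB : b 0 - (n:ℝ)/2 ≤ B := by
    rcases eq_or_lt_of_le (by omega : i + 1 ≤ n) with hi0 | hi1
    · have hni : n - i = 1 := by omega
      have hBb : B = b 0 := by rw [hBdef, hni]; simp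
      rw [hBb]
      have : (0:ℝ) ≤ (n:ℝ)/2 := by positivity
      linarith
    · have h1 := alt_ge b hb_anti hb0 (n-i) (by omega)
      have hb1 : b 1 ≤ (n:ℝ)/2 := by
        rw [hbdef]
        simp only
        have hst : node n (i+1+1) - node n (i+1) = 2/n := hstep (i+1)
        have h2n : (0:ℝ) < 2/n := by positivity
        have hle : 2/n ≤ node n (i+1+1) - x := by linarith
        calc (1:ℝ) / (node n (i+1+1) - x) ≤ 1 / (2/n) := one_div_le_one_div_of_le h2n hle
          _ = (n:ℝ)/2 := by field_simp
      linarith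
  have hab : 2*(n:ℝ) ≤ a 0 + b 0 := by
    rw [hadef, hbdef]
    simp only [Nat.sub_zero, Nat.add_zero]
    set u : ℝ := x - node n i with hu
    set v : ℝ := node n (i+1) - x with hv
    have hu0 : 0 < u := by rw [hu]; linarith
    have hv0 : 0 < v := by rw [hv]; linarith
    have huv : u + v = 2/n := by rw [hu, hv]; have := hstep i; linarith
    have key : 2*(n:ℝ) = 4/(u+v) := by
      rw [huv]
      field_simp
      ring
    have h5 : 4/(u+v) ≤ 1/u + 1/v := by
      rw [div_add_div _ _ hu0.ne' hv0.ne',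
        div_le_div_iff₀ (by linarith : (0:ℝ) < u + v) (by positivity : (0:ℝ) < u*v)]
      nlinarith [sq_nonneg (u-v)]
    linarith
  rw [habs]
  linarith

lemma translation_L1 (G : ℝ → ℝ) (hG : Integrable G volume) {ε : ℝ} (hε : 0 < ε) :
    ∃ δ > 0, ∀ s : ℝ, |s| ≤ δ → (∫ u, |G (u + s) - G u|) ≤ ε := by
  obtain ⟨φ, hφsupp, hφclose, hφcont, hφint⟩ :=
    hG.exists_hasCompactSupport_integral_sub_le (by positivity : (0:ℝ) < ε/4)
  set K1 : Set ℝ := Metric.cthickening 1 (tsupport φ) with hK1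
  have hK1c : IsCompact K1 := hφsupp.cthickening
  have hK1m : MeasurableSet K1 := Metric.isClosed_cthickening.measurableSet
  have hvol : volume K1 < ⊤ := hK1c.measure_lt_top
  set V : ℝ := (volume K1).toReal + 1 with hV
  have hV0 : 0 < V := by positivity
  obtain ⟨δ, hδ0, hδ⟩ := Metric.uniformContinuous_iff.mp
    (hφsupp.uniformContinuous_of_continuous hφcont) (ε/(4*V)) (by positivity)
  refine ⟨min (δ/2) 1, lt_min (by linarith) one_pos, fun s hs => ?_⟩
  have hs1 : |s| ≤ 1 := le_trans hs (min_le_right _ _)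
  have hsδ : |s| < δ := lt_of_le_of_lt (le_trans hs (min_le_left _ _)) (by linarith)
  have hpt : ∀ u : ℝ, |φ (u + s) - φ u| ≤ ε/(4*V) := by
    intro u
    have hdist : dist (u + s) u < δ := by
      rw [Real.dist_eq]
      simpa using hsδ
    have := hδ hdist
    rw [Real.dist_eq] at this
    exact this.le
  have hvanish : ∀ u, u ∉ K1 → |φ (u + s) - φ u| = 0 := by
    intro u hu
    have h1 : φ u = 0 := by
      apply image_eq_zero_of_notMem_tsupport
      intro hmem
      exact hu (Metric.self_subset_cthickening _ hmem)
    have h2 : φ (u + s) = 0 := by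
      apply image_eq_zero_of_notMem_tsupport
      intro hmem
      apply hu
      apply Metric.mem_cthickening_of_dist_le u (u + s) 1 _ hmem
      rw [Real.dist_eq]
      simpa using hs1
    rw [h1, h2]
    simp
  have hmid_int : Integrable (fun u => |φ (u + s) - φ u|) volume :=
    ((hφint.comp_add_right s).sub hφint).abs
  have hmid : (∫ u, |φ (u + s) - φ u|) ≤ ε/4 := by
    rw [← setIntegral_eq_integral_of_forall_compl_eq_zero hvanish]
    have hconst : IntegrableOn (fun _ : ℝ => ε/(4*V)) K1 volume :=
      integrableOn_const hvol.ne
    calc (∫ u in K1, |φ (u + s) - φ u|)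
        ≤ ∫ _u in K1, ε/(4*V) :=
          setIntegral_mono_on hmid_int.integrableOn hconst hK1m (fun u _ => hpt u)
      _ = (volume K1).toReal * (ε/(4*V)) := by
          rw [setIntegral_const, smul_eq_mul]; rfl
      _ ≤ V * (ε/(4*V)) := by
          apply mul_le_mul_of_nonneg_right _ (by positivity)
          rw [hV]
          linarith
      _ = ε/4 := by field_simp
  have h1 : Integrable (fun u => |G (u + s) - φ (u + s)|) volume :=
    ((hG.comp_add_right s).sub (hφint.comp_add_right s)).abs
  have h3 : Integrable (fun u => |φ u - G u|) volume := (hφint.sub hG).abs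
  have hGint : Integrable (fun u => |G (u + s) - G u|) volume :=
    ((hG.comp_add_right s).sub hG).abs
  have htri : ∀ u : ℝ, |G (u+s) - G u|
      ≤ |G (u+s) - φ (u+s)| + |φ (u+s) - φ u| + |φ u - G u| := by
    intro u
    have : G (u+s) - G u = (G (u+s) - φ (u+s)) + (φ (u+s) - φ u) + (φ u - G u) := by ring
    rw [this]
    exact (abs_add_le _ _).trans (by linarith [abs_add_le (G (u+s) - φ (u+s)) (φ (u+s) - φ u)])
  have e1 : (∫ u, |G (u + s) - φ (u + s)|) = ∫ u, |G u - φ u| :=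
    integral_add_right_eq_self (fun u => |G u - φ u|) s
  have e3 : (∫ u, |φ u - G u|) = ∫ u, |G u - φ u| := by
    congr 1
    ext u
    rw [abs_sub_comm]
  have hclose' : (∫ u, |G u - φ u|) ≤ ε/4 := by
    have : (fun u => |G u - φ u|) = fun u => ‖G u - φ u‖ := by
      ext u; rw [Real.norm_eq_abs]
    rw [this]
    exact hφclose
  calc (∫ u, |G (u + s) - G u|)
      ≤ ∫ u, (|G (u+s) - φ (u+s)| + |φ (u+s) - φ u| + |φ u - G u|) :=
        integral_mono hGint ((h1.add hmid_int).add h3) htri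
    _ = (∫ u, |G (u + s) - φ (u + s)|) + (∫ u, |φ (u + s) - φ u|)
          + ∫ u, |φ u - G u| := by
        have h12 : Integrable
            (fun u => |G (u + s) - φ (u + s)| + |φ (u + s) - φ u|) volume :=
          h1.add hmid_int
        rw [integral_add h12 h3, integral_add h1 hmid_int]
    _ ≤ ε/4 + ε/4 + ε/4 := by
        rw [e1, e3]
        linarith
    _ ≤ ε := by linarith

section KeyEstimate

variable {f f' g : ℝ → ℝ}

lemma f'cont (hfg : ∀ x ∈ Set.Icc (-1:ℝ) 1, f' x = f' (-1) + ∫ t in (-1:ℝ)..x, g t)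
    (hgi : IntervalIntegrable g volume (-1) 1) :
    ContinuousOn f' (Set.Icc (-1:ℝ) 1) := by
  have hprim : ContinuousOn (fun y => f' (-1) + ∫ t in (-1:ℝ)..y, g t)
      (Set.Icc (-1:ℝ) 1) := by
    apply continuousOn_const.add
    have h := intervalIntegral.continuousOn_primitive_interval' hgi Set.left_mem_uIcc
    rwa [Set.uIcc_of_le (by norm_num : (-1:ℝ) ≤ 1)] at h
  exact ContinuousOn.congr hprim (fun x hx => hfg x hx)

lemma ftc (hf : ∀ x ∈ Set.Icc (-1:ℝ) 1, HasDerivWithinAt f (f' x) (Set.Icc (-1:ℝ) 1) x)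
    (hf'c : ContinuousOn f' (Set.Icc (-1:ℝ) 1))
    {a b : ℝ} (ha : a ∈ Set.Icc (-1:ℝ) 1) (hb : b ∈ Set.Icc (-1:ℝ) 1) :
    f b - f a = ∫ t in a..b, f' t := by
  have key : ∀ p q : ℝ, p ∈ Set.Icc (-1:ℝ) 1 → q ∈ Set.Icc (-1:ℝ) 1 → p ≤ q →
      (∫ t in p..q, f' t) = f q - f p := by
    intro p q hp hq hpq
    apply intervalIntegral.integral_eq_sub_of_hasDerivAt_of_le hpq
    · intro y hy
      exact ((hf y ⟨le_trans hp.1 hy.1, le_trans hy.2 hq.2⟩).continuousWithinAt).mono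
        (Set.Icc_subset_Icc hp.1 hq.2)
    · intro y hy
      have hy' : y ∈ Set.Ioo (-1:ℝ) 1 :=
        ⟨lt_of_le_of_lt hp.1 hy.1, lt_of_lt_of_le hy.2 hq.2⟩
      exact (hf y (Set.mem_Icc_of_Ioo hy')).hasDerivAt (Icc_mem_nhds hy'.1 hy'.2)
    · apply ContinuousOn.intervalIntegrable
      apply hf'c.mono
      rw [Set.uIcc_of_le hpq]
      exact Set.Icc_subset_Icc hp.1 hq.2
  rcases le_total a b with h | h
  · rw [key a b ha hb h]
  · rw [intervalIntegral.integral_symm, key b a hb ha h]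
    ring

lemma f'diff (hfg : ∀ x ∈ Set.Icc (-1:ℝ) 1, f' x = f' (-1) + ∫ t in (-1:ℝ)..x, g t)
    (hgi : IntervalIntegrable g volume (-1) 1)
    {a b : ℝ} (ha : a ∈ Set.Icc (-1:ℝ) 1) (hb : b ∈ Set.Icc (-1:ℝ) 1) :
    f' b - f' a = ∫ t in a..b, g t := by
  have hsub : ∀ c : ℝ, c ∈ Set.Icc (-1:ℝ) 1 → IntervalIntegrable g volume (-1) c := by
    intro c hc
    apply hgi.mono_set
    apply Set.uIcc_subset_uIcc Set.left_mem_uIcc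
    rw [Set.uIcc_of_le (by norm_num : (-1:ℝ) ≤ 1)]
    exact hc
  have h := intervalIntegral.integral_interval_sub_left (hsub b hb) (hsub a ha)
  rw [hfg a ha, hfg b hb]
  linarith

end KeyEstimate

lemma pair_sum (F : ℕ → ℝ) (M : ℕ) :
    ∑ k ∈ Finset.range (2*M), F k = ∑ m ∈ Finset.range M, (F (2*m) + F (2*m+1)) := by
  induction M with
  | zero => simp
  | succ M ih =>
    have h2 : 2*(M+1) = 2*M + 1 + 1 := by ring
    rw [h2, Finset.sum_range_succ, Finset.sum_range_succ, ih, Finset.sum_range_succ]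
    ring

section KeyEstimate2

variable {f f' g : ℝ → ℝ}

set_option maxHeartbeats 1000000 in
theorem key_est
    (hf : ∀ x ∈ Set.Icc (-1:ℝ) 1, HasDerivWithinAt f (f' x) (Set.Icc (-1:ℝ) 1) x)
    (hfg : ∀ x ∈ Set.Icc (-1:ℝ) 1, f' x = f' (-1) + ∫ t in (-1:ℝ)..x, g t)
    (hgi : IntervalIntegrable g volume (-1) 1)
    {ε : ℝ} (hε : 0 < ε) :
    ∃ N : ℕ, ∀ n : ℕ, N ≤ n → Even n → 0 < n → ∀ x ∈ Set.Ioo (-1:ℝ) 1, ¬ isNode n x →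
      |Nnum f n x - f x * Dden n x - Efun f x| ≤ ε := by
  classical
  have hf'c : ContinuousOn f' (Set.Icc (-1:ℝ) 1) := f'cont hfg hgi
  set G : ℝ → ℝ := Set.indicator (Set.Icc (-1:ℝ) 1) g with hGdef
  have hGint : Integrable G volume := by
    have h1 : IntegrableOn g (Set.Ioc (-1:ℝ) 1) volume :=
      (intervalIntegrable_iff_integrableOn_Ioc_of_le (by norm_num : (-1:ℝ) ≤ 1)).1 hgi
    have h2 : IntegrableOn g (Set.Icc (-1:ℝ) 1) volume :=
      (integrableOn_Icc_iff_integrableOn_Ioc (by simp)).2 h1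
    rw [hGdef, integrable_indicator_iff measurableSet_Icc]
    exact h2
  obtain ⟨δ, hδ0, hδ⟩ := translation_L1 G hGint hε
  refine ⟨⌈2/δ⌉₊ + 1, fun n hN hev hn x hx hnx => ?_⟩
  obtain ⟨hx1, hx2⟩ := hx
  have hnr : (0:ℝ) < n := Nat.cast_pos.2 hn
  have hnne : (n:ℝ) ≠ 0 := hnr.ne'
  have hnδ : 2/(n:ℝ) ≤ δ := by
    have h1 : (⌈2/δ⌉₊ : ℝ) ≥ 2/δ := Nat.le_ceil _
    have h2 : ((⌈2/δ⌉₊ + 1 : ℕ) : ℝ) ≤ n := Nat.cast_le.2 hN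
    push_cast at h2
    rw [div_le_iff₀ hnr]
    rw [ge_iff_le, div_le_iff₀ hδ0] at h1
    nlinarith
  obtain ⟨M, hM⟩ := hev
  have h2M : n = 2*M := by omega
  have hM1 : 1 ≤ M := by omega
  -- the elementary divided differences
  set gk : ℕ → ℝ := fun k => (f (node n k) - f x) / (x - node n k) with hgk
  have hxIcc : x ∈ Set.Icc (-1:ℝ) 1 := ⟨hx1.le, hx2.le⟩
  have hsubne : ∀ k ≤ n, x - node n k ≠ 0 := fun k hk => sub_node_ne n k x hnx hk
  -- STEP A
  have hSA : Nnum f n x - f x * Dden n x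
      = ∑ k ∈ Finset.range (n+1), (-1:ℝ)^k * gk k := by
    rw [Nnum, Dden, Finset.mul_sum, ← Finset.sum_sub_distrib]
    apply Finset.sum_congr rfl
    intro k hk
    have hk' : k ≤ n := by simp only [Finset.mem_range] at hk; omega
    have hne := hsubne k hk'
    rw [hgk]
    field_simp
  -- STEP B
  have hSB : Efun f x = (gk 0 + gk n)/2 := by
    rw [Efun, hgk]
    simp only [node_zero, node_self n hn]
    have h1 : x - 1 ≠ 0 := by
      intro h; rw [sub_eq_zero] at h; exact absurd h (by linarith)
    have h2 : x + 1 ≠ 0 := by intro h; nlinarith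
    rw [show x - (-1:ℝ) = x + 1 by ring]
    field_simp
    ring
  -- STEP C
  have hpn : ((-1:ℝ))^n = 1 := (Even.neg_one_pow ⟨M, hM⟩)
  have hSC : Nnum f n x - f x * Dden n x - Efun f x
      = (1/2) * ∑ k ∈ Finset.range n, (-1:ℝ)^k * (gk k - gk (k+1)) := by
    have c1 : ∑ k ∈ Finset.range (n+1), (-1:ℝ)^k * gk k
        = (∑ k ∈ Finset.range n, (-1:ℝ)^k * gk k) + (-1:ℝ)^n * gk n :=
      Finset.sum_range_succ _ n
    have c2 : ∑ k ∈ Finset.range (n+1), (-1:ℝ)^k * gk k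
        = (∑ k ∈ Finset.range n, (-1:ℝ)^(k+1) * gk (k+1)) + (-1:ℝ)^0 * gk 0 :=
      Finset.sum_range_succ' _ n
    have c3 : ∑ k ∈ Finset.range n, (-1:ℝ)^k * (gk k - gk (k+1))
        = (∑ k ∈ Finset.range n, (-1:ℝ)^k * gk k)
          + ∑ k ∈ Finset.range n, (-1:ℝ)^(k+1) * gk (k+1) := by
      rw [← Finset.sum_add_distrib]
      apply Finset.sum_congr rfl
      intro k _
      rw [pow_succ]
      ring
    rw [hSA, hSB]
    rw [hpn] at c1
    simp only [pow_zero, one_mul] at c2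
    linarith
  -- membership of the affine points
  have hmem : ∀ k ≤ n, ∀ θ : ℝ, θ ∈ Set.Icc (0:ℝ) 1 →
      ((node n k - x)*θ + x) ∈ Set.Icc (-1:ℝ) 1 := by
    intro k hk θ hθ
    obtain ⟨hθ0, hθ1⟩ := hθ
    obtain ⟨hnk1, hnk2⟩ := node_mem n k hn hk
    constructor
    · nlinarith
    · nlinarith
  -- continuity of θ ↦ f' ((node n k - x) θ + x)
  have hcontF : ∀ k ≤ n, ContinuousOn
      (fun θ : ℝ => f' ((node n k - x)*θ + x)) (Set.Icc (0:ℝ) 1) := by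
    intro k hk
    apply hf'c.comp
    · exact ((continuous_const.mul continuous_id').add continuous_const).continuousOn
    · intro θ hθ
      exact hmem k hk θ hθ
  have hintF : ∀ k ≤ n, IntervalIntegrable
      (fun θ : ℝ => f' ((node n k - x)*θ + x)) volume 0 1 := by
    intro k hk
    apply ContinuousOn.intervalIntegrable
    rw [Set.uIcc_of_le (zero_le_one : (0:ℝ) ≤ 1)]
    exact hcontF k hk
  -- STEP F : integral representation of gk
  have hSF : ∀ k ≤ n, gk k = -∫ θ in (0:ℝ)..1, f' ((node n k - x)*θ + x) := by
    intro k hk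
    have hftc : f (node n k) - f x = ∫ t in x..(node n k), f' t :=
      ftc hf hf'c hxIcc (node_mem n k hn hk)
    have hc : node n k - x ≠ 0 := by
      have := hsubne k hk
      intro h
      apply this
      linarith [sub_eq_zero.1 h]
    have hcv : (∫ θ in (0:ℝ)..1, f' ((node n k - x)*θ + x))
        = (node n k - x)⁻¹ • ∫ t in ((node n k - x)*0 + x)..((node n k - x)*1 + x), f' t :=
      intervalIntegral.integral_comp_mul_add f' hc x
    rw [show (node n k - x)*0 + x = x by ring, show (node n k - x)*1 + x = node n k by ring]
      at hcv
    rw [hgk, hcv, ← hftc, smul_eq_mul]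
    field_simp
    rw [div_eq_iff (hsubne k hk)]
    ring
  -- θ-slice functions
  set Psi : ℕ → ℝ → ℝ := fun m θ =>
    f' ((node n (2*m+2) - x)*θ + x) - 2 * f' ((node n (2*m+1) - x)*θ + x)
      + f' ((node n (2*m) - x)*θ + x) with hPsi
  have hPsiContOn : ∀ m < M, ContinuousOn (Psi m) (Set.Icc (0:ℝ) 1) := by
    intro m hm
    have h0 : 2*m ≤ n := by omega
    have h1 : 2*m+1 ≤ n := by omega
    have h2 : 2*m+2 ≤ n := by omega
    exact ((hcontF _ h2).sub (continuousOn_const.mul (hcontF _ h1))).add (hcontF _ h0)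
  have hPsiInt : ∀ m < M, IntervalIntegrable (Psi m) volume 0 1 := by
    intro m hm
    have h0 : 2*m ≤ n := by omega
    have h1 : 2*m+1 ≤ n := by omega
    have h2 : 2*m+2 ≤ n := by omega
    exact ((hintF _ h2).sub ((hintF _ h1).const_mul 2)).add (hintF _ h0)
  -- second differences
  have hdd : ∀ m < M, gk (2*m) - 2 * gk (2*m+1) + gk (2*m+2)
      = -∫ θ in (0:ℝ)..1, Psi m θ := by
    intro m hm
    have h0 : 2*m ≤ n := by omega
    have h1 : 2*m+1 ≤ n := by omega
    have h2 : 2*m+2 ≤ n := by omega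
    rw [hSF _ h0, hSF _ h1, hSF _ h2, hPsi]
    rw [intervalIntegral.integral_add
        ((hintF _ h2).sub ((hintF _ h1).const_mul 2)) (hintF _ h0),
      intervalIntegral.integral_sub (hintF _ h2) ((hintF _ h1).const_mul 2),
      intervalIntegral.integral_const_mul]
    ring
  -- full representation
  have hW : Nnum f n x - f x * Dden n x - Efun f x
      = (-1/2) * ∫ θ in (0:ℝ)..1, (∑ m ∈ Finset.range M, Psi m θ) := by
    have e1 : ∑ k ∈ Finset.range n, (-1:ℝ)^k * (gk k - gk (k+1))
        = ∑ m ∈ Finset.range M, (gk (2*m) - 2*gk (2*m+1) + gk (2*m+2)) := by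
      rw [h2M, pair_sum]
      apply Finset.sum_congr rfl
      intro m _
      have he : ((-1:ℝ))^(2*m) = 1 := Even.neg_one_pow (even_two_mul m)
      have ho : ((-1:ℝ))^(2*m+1) = -1 := by rw [pow_succ, he]; ring
      rw [he, ho]
      ring
    have e2 : ∑ m ∈ Finset.range M, (gk (2*m) - 2*gk (2*m+1) + gk (2*m+2))
        = -∫ θ in (0:ℝ)..1, (∑ m ∈ Finset.range M, Psi m θ) := by
      rw [intervalIntegral.integral_finset_sum
        (fun m hm => hPsiInt m (Finset.mem_range.1 hm)), ← Finset.sum_neg_distrib]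
      apply Finset.sum_congr rfl
      intro m hm
      exact hdd m (Finset.mem_range.1 hm)
    rw [hSC, e1, e2]
    ring
  -- slicewise bound
  have hslice : ∀ θ ∈ Set.Icc (0:ℝ) 1, |∑ m ∈ Finset.range M, Psi m θ| ≤ ε := by
    intro θ hθmem
    obtain ⟨hθ0, hθ1⟩ := hθmem
    set s : ℝ := θ * (2/(n:ℝ)) with hs
    have h2npos : (0:ℝ) < 2/(n:ℝ)  := by positivity
    have hs0 : 0 ≤ s := by rw [hs]; positivity
    have hsδ : s ≤ δ := by
      have h1 : s ≤ 2/(n:ℝ) := by rw [hs]; nlinarith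
      linarith
    set Q : ℕ → ℝ := fun m => (node n (2*m) - x)*θ + x with hQ
    have hQstep : ∀ m, Q (m+1) = Q m + 2*s := by
      intro m
      have hnd : node n (2*(m+1)) = node n (2*m) + 2/n + 2/n := by
        rw [show 2*(m+1) = (2*m+1)+1 by ring, node_succ _ _ hn, node_succ _ _ hn]
      rw [hQ]
      simp only
      rw [hnd, hs]
      ring
    have hψint : Integrable (fun u => |G (u + s) - G u|) volume :=
      ((hGint.comp_add_right s).sub hGint).abs
    have hGiv : IntervalIntegrable G volume (Q 0) (Q M) := hGint.intervalIntegrable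
    -- pointwise identities of the affine points
    have heqA : ∀ m : ℕ, (node n (2*m+1) - x)*θ + x = Q m + s := by
      intro m
      rw [hQ]
      simp only
      rw [node_succ _ _ hn, hs]
      ring
    have heqB : ∀ m : ℕ, (node n (2*m+2) - x)*θ + x = Q m + 2*s := by
      intro m
      rw [hQ]
      simp only
      rw [show 2*m+2 = (2*m+1)+1 by ring, node_succ _ _ hn, node_succ _ _ hn, hs]
      ring
    have hPsiEq : ∀ m < M, Psi m θ = ∫ u in (Q m)..(Q m + s), (G (u + s) - G u) := by
      intro m hm
      have h0 : 2*m ≤ n := by omega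
      have h1 : 2*m+1 ≤ n := by omega
      have h2 : 2*m+2 ≤ n := by omega
      have hq0 : Q m ∈ Set.Icc (-1:ℝ) 1 := hmem _ h0 θ ⟨hθ0, hθ1⟩
      have hq1 : Q m + s ∈ Set.Icc (-1:ℝ) 1 := by
        have hh := hmem _ h1 θ ⟨hθ0, hθ1⟩
        rwa [heqA m] at hh
      have hq2 : Q m + 2*s ∈ Set.Icc (-1:ℝ) 1 := by
        have hh := hmem _ h2 θ ⟨hθ0, hθ1⟩
        rwa [heqB m] at hh
      have hgG : ∀ p q : ℝ, p ∈ Set.Icc (-1:ℝ) 1 → q ∈ Set.Icc (-1:ℝ) 1 →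
          (∫ t in p..q, g t) = ∫ t in p..q, G t := by
        intro p q hp hq
        apply intervalIntegral.integral_congr
        intro t ht
        have htIcc : t ∈ Set.Icc (-1:ℝ) 1 := by
          obtain ⟨ht1, ht2⟩ := ht
          constructor
          · exact le_trans (le_min hp.1 hq.1) ht1
          · exact le_trans ht2 (max_le hp.2 hq.2)
        rw [hGdef]
        exact (Set.indicator_of_mem htIcc g).symm
      have hd1 : f' (Q m + s) - f' (Q m) = ∫ t in (Q m)..(Q m + s), G t := by
        rw [f'diff hfg hgi hq0 hq1]
        exact hgG _ _ hq0 hq1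
      have hd2 : f' (Q m + 2*s) - f' (Q m + s) = ∫ t in (Q m + s)..(Q m + 2*s), G t := by
        rw [f'diff hfg hgi hq1 hq2]
        exact hgG _ _ hq1 hq2
      have htr : (∫ t in (Q m + s)..(Q m + 2*s), G t)
          = ∫ u in (Q m)..(Q m + s), G (u + s) := by
        rw [intervalIntegral.integral_comp_add_right (fun t => G t) s,
          show Q m + s + s = Q m + 2*s by ring]
      have hPsiVal : Psi m θ = (f' (Q m + 2*s) - f' (Q m + s)) - (f' (Q m + s) - f' (Q m)) := by
        rw [hPsi]
        simp only
        rw [heqA m, heqB m, show (node n (2*m) - x)*θ + x = Q m from rfl]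
        ring
      rw [hPsiVal, hd1, hd2, htr,
        intervalIntegral.integral_sub (hGint.comp_add_right s).intervalIntegrable
          hGint.intervalIntegrable]
    -- monotone positions
    have hQmono : ∀ m : ℕ, Q m = Q 0 + (m:ℝ)*(2*s) := by
      intro m
      induction m with
      | zero => simp
      | succ m ih =>
        rw [hQstep m, ih]
        push_cast
        ring
    -- summing up
    have step1 : |∑ m ∈ Finset.range M, Psi m θ| ≤ ∑ m ∈ Finset.range M, |Psi m θ| :=
      Finset.abs_sum_le_sum_abs _ _
    have step2 : ∀ m < M, |Psi m θ| ≤ ∫ u in (Q m)..(Q (m+1)), |G (u + s) - G u| := by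
      intro m hm
      rw [hPsiEq m hm]
      have ha1 : Q m ≤ Q m + s := by linarith
      calc |∫ u in (Q m)..(Q m + s), (G (u + s) - G u)|
          ≤ ∫ u in (Q m)..(Q m + s), |G (u + s) - G u| :=
            intervalIntegral.abs_integral_le_integral_abs ha1
        _ ≤ ∫ u in (Q m)..(Q (m+1)), |G (u + s) - G u| := by
            apply intervalIntegral.integral_mono_interval le_rfl ha1
              (by rw [hQstep m]; linarith)
              (Filter.Eventually.of_forall (fun u => abs_nonneg _))
              hψint.intervalIntegrable
    have step3 : ∑ m ∈ Finset.range M, (∫ u in (Q m)..(Q (m+1)), |G (u + s) - G u|)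
        = ∫ u in (Q 0)..(Q M), |G (u + s) - G u| :=
      intervalIntegral.sum_integral_adjacent_intervals
        (fun k _ => hψint.intervalIntegrable)
    have hQ0M : Q 0 ≤ Q M := by
      rw [hQmono M]
      have : (0:ℝ) ≤ (M:ℝ)*(2*s) := by positivity
      linarith
    have step4 : (∫ u in (Q 0)..(Q M), |G (u + s) - G u|) ≤ ∫ u, |G (u + s) - G u| := by
      rw [intervalIntegral.integral_of_le hQ0M]
      exact setIntegral_le_integral hψint (Filter.Eventually.of_forall (fun u => abs_nonneg _))
    have step5 : (∫ u, |G (u + s) - G u|) ≤ ε := hδ s (by rwa [abs_of_nonneg hs0])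
    calc |∑ m ∈ Finset.range M, Psi m θ|
        ≤ ∑ m ∈ Finset.range M, |Psi m θ| := step1
      _ ≤ ∑ m ∈ Finset.range M, (∫ u in (Q m)..(Q (m+1)), |G (u + s) - G u|) :=
          Finset.sum_le_sum (fun m hm => step2 m (Finset.mem_range.1 hm))
      _ = ∫ u in (Q 0)..(Q M), |G (u + s) - G u| := step3
      _ ≤ ∫ u, |G (u + s) - G u| := step4
      _ ≤ ε := step5
  -- final bound
  have hΦcont : ContinuousOn (fun θ => ∑ m ∈ Finset.range M, Psi m θ) (Set.Icc (0:ℝ) 1) := by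
    apply continuousOn_finset_sum
    intro m hm
    exact hPsiContOn m (Finset.mem_range.1 hm)
  have hΦint : IntervalIntegrable (fun θ => ∑ m ∈ Finset.range M, Psi m θ) volume 0 1 := by
    apply ContinuousOn.intervalIntegrable
    rw [Set.uIcc_of_le (zero_le_one : (0:ℝ) ≤ 1)]
    exact hΦcont
  have habs : |∫ θ in (0:ℝ)..1, (∑ m ∈ Finset.range M, Psi m θ)|
      ≤ ∫ θ in (0:ℝ)..1, |∑ m ∈ Finset.range M, Psi m θ| :=
    intervalIntegral.abs_integral_le_integral_abs zero_le_one
  have hbound : (∫ θ in (0:ℝ)..1, |∑ m ∈ Finset.range M, Psi m θ|)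
      ≤ ∫ _θ in (0:ℝ)..1, ε := by
    apply intervalIntegral.integral_mono_on zero_le_one hΦint.abs
      intervalIntegrable_const
    exact hslice
  have hconstint : (∫ _θ in (0:ℝ)..1, ε) = ε := by simp
  rw [hW, abs_mul, show |(-1:ℝ)/2| = 1/2 by norm_num]
  nlinarith [abs_nonneg (∫ θ in (0:ℝ)..1, (∑ m ∈ Finset.range M, Psi m θ))]



end KeyEstimate2


/-- for `f ∈ AC¹` and an even sequence `(n_j)`,
`n_j · sup_{x ∈ (-1,1) not a node} |B_{n_j}(f,x) - f(x) - E(f,x)/D_{n_j}(x)| → 0`. -/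
theorem statement9 (f : ℝ → ℝ) (hf : AC1 f) (n : ℕ → ℕ) (hmono : StrictMono n)
    (heven : ∀ j, Even (n j) ∧ 0 < n j) :
    Filter.Tendsto
      (fun j : ℕ => (n j : ℝ) *
        ⨆ x : {x : ℝ // x ∈ Set.Ioo (-1 : ℝ) 1 ∧ ¬ isNode (n j) x},
          |berrut f (n j) (x : ℝ) - f (x : ℝ) - Efun f (x : ℝ) / Dden (n j) (x : ℝ)|)
      Filter.atTop (nhds 0) := by
  obtain ⟨f', hf', g, hgi, hfg⟩ := hf
  rw [Metric.tendsto_atTop]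
  intro ε hε
  obtain ⟨N, hN⟩ := key_est hf' hfg hgi (show (0:ℝ) < ε/4 by linarith)
  refine ⟨N, fun j hj => ?_⟩
  have hnj : N ≤ n j := le_trans hj (hmono.id_le j)
  obtain ⟨hevj, hposj⟩ := heven j
  have hnr : (0:ℝ) < n j := Nat.cast_pos.2 hposj
  have hpt : ∀ x : {x : ℝ // x ∈ Set.Ioo (-1:ℝ) 1 ∧ ¬ isNode (n j) x},
      |berrut f (n j) (x:ℝ) - f (x:ℝ) - Efun f (x:ℝ) / Dden (n j) (x:ℝ)|
        ≤ (ε/4)/(n j : ℝ) := by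
    intro x
    obtain ⟨hxI, hxN⟩ := x.2
    have hD := Dbound (n j) hposj hxI hxN
    have hDne : Dden (n j) (x:ℝ) ≠ 0 := by
      intro h
      rw [h, abs_zero] at hD
      linarith
    have hWb := hN (n j) hnj hevj hposj (x:ℝ) hxI hxN
    have heq : berrut f (n j) (x:ℝ) - f (x:ℝ) - Efun f (x:ℝ) / Dden (n j) (x:ℝ)
        = (Nnum f (n j) (x:ℝ) - f (x:ℝ) * Dden (n j) (x:ℝ) - Efun f (x:ℝ))
            / Dden (n j) (x:ℝ) := by
      rw [berrut, if_neg hxN]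
      field_simp
    rw [heq, abs_div]
    exact div_le_div₀ (by positivity) hWb hnr hD
  set S : ℝ := ⨆ x : {x : ℝ // x ∈ Set.Ioo (-1:ℝ) 1 ∧ ¬ isNode (n j) x},
      |berrut f (n j) (x:ℝ) - f (x:ℝ) - Efun f (x:ℝ) / Dden (n j) (x:ℝ)| with hS
  have hsup : S ≤ (ε/4)/(n j : ℝ) := Real.iSup_le hpt (by positivity)
  have hsup0 : 0 ≤ S := Real.iSup_nonneg (fun x => abs_nonneg _)
  have hle : (n j : ℝ) * S ≤ ε/4 := by
    have h1 := mul_le_mul_of_nonneg_left hsup (le_of_lt hnr)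
    rwa [show (n j:ℝ) * ((ε/4)/(n j : ℝ)) = ε/4 by field_simp] at h1
  rw [Real.dist_eq, sub_zero, abs_of_nonneg (mul_nonneg hnr.le hsup0)]
  linarith
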